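/- Let P be a transition function on a layered episodic MDP, let π₁ be a stochastic policy and let π₂ : S → A be a deterministic policy (i.e. the stochastic policy placing all mass on action π₂(s) in state s). Then Σ_{s ≠ s_L} Σ_{a ∈ A} |q^{P,π₁}(s,a) − q^{P,π₂}(s,a)| ≤ 2L·Σ_{s ≠ s_L} Σ_{a ≠ π₂(s)} q^{P,π₁}(s,a). -/

import Mathlib

open Finset

/-- A layered episodic MDP: a finite state space partitioned into layers
`0, 1, …, L` (`L ≥ 1`) via the map `layer`, where layer `0` contains only the
initial state `s0` and layer `L` contains only the terminal state `sL`,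
together with a finite action set. -/
structure LayeredMDP where
  State : Type
  Action : Type
  fintState : Fintype State
  decEqState : DecidableEq State
  fintAction : Fintype Action
  L : ℕ
  one_le_L : 1 ≤ L
  layer : State → ℕ
  layer_le : ∀ s, layer s ≤ L
  s0 : State
  sL : State
  layer_s0 : layer s0 = 0
  layer_sL : layer sL = L
  eq_s0_of_layer : ∀ s, layer s = 0 → s = s0
  eq_sL_of_layer : ∀ s, layer s = L → s = sL

attribute [instance] LayeredMDP.fintState LayeredMDP.decEqState LayeredMDP.fintAction

namespace LayeredMDP

variable (M : LayeredMDP)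

/-- A substochastic transition: nonnegative weights, supported on the next
layer, summing to at most `1` at every non-terminal state-action pair (the
missing mass is interpreted as moving directly to the terminal state). -/
def IsSubTransition (P : M.State → M.Action → M.State → ℝ) : Prop :=
  (∀ s a s', 0 ≤ P s a s') ∧
  (∀ s a s', P s a s' ≠ 0 → M.layer s' = M.layer s + 1) ∧
  (∀ s a, M.layer s < M.L → ∑ s', P s a s' ≤ 1)

/-- A (fully stochastic) transition function: for each non-terminal `(s,a)`,
a probability distribution on the next layer. -/
def IsTransition (P : M.State → M.Action → M.State → ℝ) : Prop :=
  (∀ s a s', 0 ≤ P s a s') ∧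
  (∀ s a s', P s a s' ≠ 0 → M.layer s' = M.layer s + 1) ∧
  (∀ s a, M.layer s < M.L → ∑ s', P s a s' = 1)

/-- A stochastic policy: a probability distribution over actions at each state. -/
def IsPolicy (π : M.State → M.Action → ℝ) : Prop :=
  (∀ s a, 0 ≤ π s a) ∧ (∀ s, ∑ a, π s a = 1)

/-- `occAuxFrom P π u n s` : probability of being at state `s` after `n` steps
when starting from state `u`, following policy `π` under transition `P`. -/
def occAuxFrom (P : M.State → M.Action → M.State → ℝ) (π : M.State → M.Action → ℝ)
    (u : M.State) : ℕ → M.State → ℝ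
  | 0 => fun s => if s = u then 1 else 0
  | n + 1 => fun s => ∑ s', ∑ a', occAuxFrom P π u n s' * π s' a' * P s' a' s

/-- Occupancy measure started at `u`: `occFrom P π u s a` is the probability of
visiting `(s,a)` when starting from `u` and executing `π` under transition `P`. -/
def occFrom (P : M.State → M.Action → M.State → ℝ) (π : M.State → M.Action → ℝ)
    (u : M.State) (s : M.State) (a : M.Action) : ℝ :=
  (if M.layer u ≤ M.layer s then M.occAuxFrom P π u (M.layer s - M.layer u) s else 0) * π s a

/-- Occupancy measure `q^{P,π}(s,a)` (started at the initial state `s0`). -/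
def occ (P : M.State → M.Action → M.State → ℝ) (π : M.State → M.Action → ℝ)
    (s : M.State) (a : M.Action) : ℝ :=
  M.occFrom P π M.s0 s a

/-- State occupancy measure `q^{P,π}(s) = Σ_a q^{P,π}(s,a)`. -/
def occState (P : M.State → M.Action → M.State → ℝ) (π : M.State → M.Action → ℝ)
    (s : M.State) : ℝ :=
  ∑ a, M.occ P π s a

/-- Backward recursion for value functions: `valAux P π ℓ n s` is the value of
state `s` with `n` steps remaining. -/
def valAux (P : M.State → M.Action → M.State → ℝ) (π : M.State → M.Action → ℝ)
    (ℓ : M.State → M.Action → ℝ) : ℕ → M.State → ℝ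
  | 0 => fun _ => 0
  | n + 1 => fun s => ∑ a, π s a * (ℓ s a + ∑ s', P s a s' * valAux P π ℓ n s')

/-- State value function `V^{P,π}(s;ℓ)`. -/
def V (P : M.State → M.Action → M.State → ℝ) (π : M.State → M.Action → ℝ)
    (ℓ : M.State → M.Action → ℝ) (s : M.State) : ℝ :=
  M.valAux P π ℓ (M.L - M.layer s) s

/-- State-action value function `Q^{P,π}(s,a;ℓ)` (equal to `0` at the terminal layer). -/
def Q (P : M.State → M.Action → M.State → ℝ) (π : M.State → M.Action → ℝ)
    (ℓ : M.State → M.Action → ℝ) (s : M.State) (a : M.Action) : ℝ :=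
  if M.layer s < M.L then ℓ s a + ∑ s', P s a s' * M.V P π ℓ s' else 0

end LayeredMDP


namespace LayeredMDP

lemma occAuxFrom_nonneg (M : LayeredMDP) (P : M.State → M.Action → M.State → ℝ)
    (hP : ∀ s a s', 0 ≤ P s a s') (π : M.State → M.Action → ℝ)
    (hπ : ∀ s a, 0 ≤ π s a) (u : M.State) :
    ∀ n s, 0 ≤ M.occAuxFrom P π u n s := by
  intro n
  induction n with
  | zero =>
    intro s
    simp only [occAuxFrom]
    split <;> norm_num
  | succ n ih =>
    intro s
    simp only [occAuxFrom]
    exact Finset.sum_nonneg fun s' _ => Finset.sum_nonneg fun a' _ =>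
      mul_nonneg (mul_nonneg (ih s') (hπ s' a')) (hP s' a' s)

lemma occAuxFrom_eq_zero (M : LayeredMDP) (P : M.State → M.Action → M.State → ℝ)
    (hP : ∀ s a s', P s a s' ≠ 0 → M.layer s' = M.layer s + 1)
    (π : M.State → M.Action → ℝ) (u : M.State) :
    ∀ n s, M.layer s ≠ M.layer u + n → M.occAuxFrom P π u n s = 0 := by
  intro n
  induction n with
  | zero =>
    intro s h
    simp only [occAuxFrom, ite_eq_right_iff]
    intro he
    exact absurd (by rw [he]; omega) h
  | succ n ih =>
    intro s h
    simp only [occAuxFrom]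
    apply Finset.sum_eq_zero; intro s' _
    apply Finset.sum_eq_zero; intro a' _
    by_cases h0 : P s' a' s = 0
    · simp [h0]
    · have h1 := hP s' a' s h0
      have h2 : M.layer s' ≠ M.layer u + n := by omega
      rw [ih s' h2]; ring

end LayeredMDP

/-- Key per-state bound. -/
lemma abs_sum_det {A : Type} [Fintype A] [DecidableEq A] (π : A → ℝ)
    (hπ0 : ∀ a, 0 ≤ π a) (hπ1 : ∑ a, π a = 1) (c : A) (x y : ℝ) (hx : 0 ≤ x) :
    ∑ a, |x * π a - (if a = c then y else 0)| ≤
      2 * ∑ a ∈ Finset.univ.filter (fun a => a ≠ c), x * π a + |x - y| := by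
  have hfe : (Finset.univ.filter (fun a => a ≠ c)) = Finset.univ.erase c :=
    Finset.filter_ne' _ _
  have hsplit : ∀ f : A → ℝ, ∑ a, f a = ∑ a ∈ Finset.univ.erase c, f a + f c :=
    fun f => (Finset.sum_erase_add _ _ (Finset.mem_univ c)).symm
  rw [hfe, hsplit fun a => |x * π a - (if a = c then y else 0)|]
  have h1 : ∑ a ∈ Finset.univ.erase c, |x * π a - (if a = c then y else 0)|
      = ∑ a ∈ Finset.univ.erase c, x * π a := by
    apply Finset.sum_congr rfl
    intro a ha
    rw [if_neg (Finset.ne_of_mem_erase ha), sub_zero,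
      abs_of_nonneg (mul_nonneg hx (hπ0 a))]
  rw [h1, if_pos rfl]
  have hπc : π c ≤ 1 := by
    rw [hsplit π] at hπ1
    have := Finset.sum_nonneg (fun a (_ : a ∈ Finset.univ.erase c) => hπ0 a)
    linarith
  have h2 : |x * π c - y| ≤ (x - x * π c) + |x - y| := by
    have : |x * π c - y| ≤ |x * π c - x| + |x - y| := by
      have := abs_sub_le (x * π c) x y
      linarith [abs_sub_le (x * π c) x y]
    have h3 : |x * π c - x| = x - x * π c := by
      rw [abs_of_nonpos (by nlinarith)]; ring
    linarith
  have h4 : x - x * π c = ∑ a ∈ Finset.univ.erase c, x * π a := by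
    rw [← Finset.mul_sum]
    rw [hsplit π] at hπ1
    nlinarith [hπ1]
  linarith [h2, h4.le, h4.ge]

namespace LayeredMDP

lemma step_bound (M : LayeredMDP) [DecidableEq M.Action]
    (P : M.State → M.Action → M.State → ℝ) (hP : M.IsTransition P)
    (π₁ : M.State → M.Action → ℝ) (hπ₁ : M.IsPolicy π₁)
    (π₂ : M.State → M.Action) (n : ℕ) (hn : n < M.L) :
    ∑ s, |M.occAuxFrom P π₁ M.s0 (n+1) s -
          M.occAuxFrom P (fun s a => if a = π₂ s then (1:ℝ) else 0) M.s0 (n+1) s|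
      ≤ (∑ s, |M.occAuxFrom P π₁ M.s0 n s -
          M.occAuxFrom P (fun s a => if a = π₂ s then (1:ℝ) else 0) M.s0 n s|)
        + 2 * ∑ s, ∑ a ∈ Finset.univ.filter (fun a => a ≠ π₂ s),
            M.occAuxFrom P π₁ M.s0 n s * π₁ s a := by
  obtain ⟨hP0, hPlayer, hPsum⟩ := hP
  obtain ⟨hπ0, hπsum⟩ := hπ₁
  set π2s : M.State → M.Action → ℝ := fun s a => if a = π₂ s then (1:ℝ) else 0 with hπ2s
  set f1 : ℕ → M.State → ℝ := M.occAuxFrom P π₁ M.s0 with hf1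
  set f2 : ℕ → M.State → ℝ := M.occAuxFrom P π2s M.s0 with hf2
  have hf1nn : ∀ m s, 0 ≤ f1 m s := M.occAuxFrom_nonneg P hP0 π₁ hπ0 M.s0
  have hf2nn : ∀ m s, 0 ≤ f2 m s := M.occAuxFrom_nonneg P hP0 π2s
    (fun s a => by simp only [hπ2s]; split <;> norm_num) M.s0
  have hz1 : ∀ m s, M.layer s ≠ m → f1 m s = 0 := fun m s h =>
    M.occAuxFrom_eq_zero P hPlayer π₁ M.s0 m s (by rw [M.layer_s0]; omega)
  have hz2 : ∀ m s, M.layer s ≠ m → f2 m s = 0 := fun m s h =>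
    M.occAuxFrom_eq_zero P hPlayer π2s M.s0 m s (by rw [M.layer_s0]; omega)
  calc ∑ s, |f1 (n+1) s - f2 (n+1) s|
      ≤ ∑ s, ∑ s', ∑ a',
          |f1 n s' * π₁ s' a' - f2 n s' * π2s s' a'| * P s' a' s := by
        apply Finset.sum_le_sum; intro s _
        have hd : f1 (n+1) s - f2 (n+1) s
            = ∑ s', ∑ a', (f1 n s' * π₁ s' a' - f2 n s' * π2s s' a') * P s' a' s := by
          show M.occAuxFrom P π₁ M.s0 (n+1) s - M.occAuxFrom P π2s M.s0 (n+1) s = _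
          simp only [occAuxFrom, ← Finset.sum_sub_distrib, sub_mul]
          rfl
        rw [hd]
        refine (Finset.abs_sum_le_sum_abs _ _).trans ?_
        apply Finset.sum_le_sum; intro s' _
        refine (Finset.abs_sum_le_sum_abs _ _).trans ?_
        apply Finset.sum_le_sum; intro a' _
        rw [abs_mul, abs_of_nonneg (hP0 s' a' s)]
    _ = ∑ s', ∑ a',
          |f1 n s' * π₁ s' a' - f2 n s' * π2s s' a'| * ∑ s, P s' a' s := by
        rw [Finset.sum_comm]
        apply Finset.sum_congr rfl; intro s' _
        rw [Finset.sum_comm]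
        apply Finset.sum_congr rfl; intro a' _
        rw [← Finset.mul_sum]
    _ ≤ ∑ s', ∑ a', |f1 n s' * π₁ s' a' - f2 n s' * π2s s' a'| := by
        apply Finset.sum_le_sum; intro s' _
        apply Finset.sum_le_sum; intro a' _
        by_cases h : M.layer s' < M.L
        · exact mul_le_of_le_one_right (abs_nonneg _) (le_of_eq (hPsum s' a' h))
        · have hne : M.layer s' ≠ n := by omega
          rw [hz1 n s' hne, hz2 n s' hne]
          simp
    _ ≤ ∑ s', (2 * ∑ a ∈ Finset.univ.filter (fun a => a ≠ π₂ s'),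
            f1 n s' * π₁ s' a + |f1 n s' - f2 n s'|) := by
        apply Finset.sum_le_sum; intro s' _
        have : ∀ a', f2 n s' * π2s s' a' = if a' = π₂ s' then f2 n s' else 0 := by
          intro a'; simp only [hπ2s]; split <;> ring
        simp only [this]
        exact abs_sum_det (π₁ s') (hπ0 s') (hπsum s') (π₂ s') _ _ (hf1nn n s')
    _ = (∑ s, |f1 n s - f2 n s|)
        + 2 * ∑ s, ∑ a ∈ Finset.univ.filter (fun a => a ≠ π₂ s), f1 n s * π₁ s a := by
        rw [Finset.sum_add_distrib, Finset.mul_sum]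
        ring

end LayeredMDP

namespace LayeredMDP

lemma cum_bound (M : LayeredMDP) [DecidableEq M.Action]
    (P : M.State → M.Action → M.State → ℝ) (hP : M.IsTransition P)
    (π₁ : M.State → M.Action → ℝ) (hπ₁ : M.IsPolicy π₁)
    (π₂ : M.State → M.Action) (k : ℕ) (hk : k ≤ M.L) :
    ∑ s, |M.occAuxFrom P π₁ M.s0 k s -
          M.occAuxFrom P (fun s a => if a = π₂ s then (1:ℝ) else 0) M.s0 k s|
      ≤ 2 * ∑ j ∈ Finset.range k, ∑ s, ∑ a ∈ Finset.univ.filter (fun a => a ≠ π₂ s),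
            M.occAuxFrom P π₁ M.s0 j s * π₁ s a := by
  induction k with
  | zero => simp [occAuxFrom]
  | succ k ih =>
    have hk' : k < M.L := hk
    calc ∑ s, |M.occAuxFrom P π₁ M.s0 (k+1) s -
            M.occAuxFrom P (fun s a => if a = π₂ s then (1:ℝ) else 0) M.s0 (k+1) s|
        ≤ (∑ s, |M.occAuxFrom P π₁ M.s0 k s -
            M.occAuxFrom P (fun s a => if a = π₂ s then (1:ℝ) else 0) M.s0 k s|)
          + 2 * ∑ s, ∑ a ∈ Finset.univ.filter (fun a => a ≠ π₂ s),
              M.occAuxFrom P π₁ M.s0 k s * π₁ s a :=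
          M.step_bound P hP π₁ hπ₁ π₂ k hk'
      _ ≤ 2 * ∑ j ∈ Finset.range (k+1), ∑ s, ∑ a ∈ Finset.univ.filter (fun a => a ≠ π₂ s),
              M.occAuxFrom P π₁ M.s0 j s * π₁ s a := by
          rw [Finset.sum_range_succ]
          have := ih (le_of_lt hk')
          linarith

end LayeredMDP

open LayeredMDP in
/-- **Occupancy difference against a deterministic policy (Corollary D.15).**
For a transition function `P`, a stochastic policy `π₁` and a deterministic
policy `π₂ : S → A` (viewed as the stochastic policy placing all mass on
`π₂ s`),
`Σ_{s ≠ s_L} Σ_a |q^{P,π₁}(s,a) − q^{P,π₂}(s,a)|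
  ≤ 2L · Σ_{s ≠ s_L} Σ_{a ≠ π₂(s)} q^{P,π₁}(s,a)`. -/
theorem occupancy_diff_deterministic (M : LayeredMDP)
    [DecidableEq M.Action]
    (P : M.State → M.Action → M.State → ℝ) (hP : M.IsTransition P)
    (π₁ : M.State → M.Action → ℝ) (hπ₁ : M.IsPolicy π₁)
    (π₂ : M.State → M.Action) :
    ∑ s ∈ Finset.univ.filter (fun s => s ≠ M.sL), ∑ a,
        |M.occ P π₁ s a -
          M.occ P (fun s a => if a = π₂ s then (1 : ℝ) else 0) s a|
      ≤ 2 * (M.L : ℝ) *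
        ∑ s ∈ Finset.univ.filter (fun s => s ≠ M.sL),
          ∑ a ∈ Finset.univ.filter (fun a => a ≠ π₂ s),
            M.occ P π₁ s a := by
  have hP0 := hP.1
  have hPlayer := hP.2.1
  have hπ0 := hπ₁.1
  have hπsum := hπ₁.2
  set π2s : M.State → M.Action → ℝ := fun s a => if a = π₂ s then (1:ℝ) else 0 with hπ2s
  set f1 : ℕ → M.State → ℝ := M.occAuxFrom P π₁ M.s0 with hf1
  set f2 : ℕ → M.State → ℝ := M.occAuxFrom P π2s M.s0 with hf2
  have hf1nn : ∀ m s, 0 ≤ f1 m s := M.occAuxFrom_nonneg P hP0 π₁ hπ0 M.s0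
  have hz1 : ∀ m (s : M.State), M.layer s ≠ m → f1 m s = 0 := fun m s h =>
    M.occAuxFrom_eq_zero P hPlayer π₁ M.s0 m s (by rw [M.layer_s0]; omega)
  have hocc1 : ∀ s a, M.occ P π₁ s a = f1 (M.layer s) s * π₁ s a := by
    intro s a
    show (if M.layer M.s0 ≤ M.layer s then
        M.occAuxFrom P π₁ M.s0 (M.layer s - M.layer M.s0) s else 0) * π₁ s a = _
    rw [M.layer_s0]
    simp [hf1]
  have hocc2 : ∀ s a, M.occ P π2s s a = f2 (M.layer s) s * π2s s a := by
    intro s a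
    show (if M.layer M.s0 ≤ M.layer s then
        M.occAuxFrom P π2s M.s0 (M.layer s - M.layer M.s0) s else 0) * π2s s a = _
    rw [M.layer_s0]
    simp [hf2]
  simp only [hocc1, hocc2]
  set filt : Finset M.State := Finset.univ.filter (fun s => s ≠ M.sL) with hfilt
  set Et : ℝ := ∑ s ∈ filt, ∑ a ∈ Finset.univ.filter (fun a => a ≠ π₂ s),
      f1 (M.layer s) s * π₁ s a with hEt
  have hmaps : ∀ s ∈ filt, M.layer s ∈ Finset.range M.L := by
    intro s hs
    rw [hfilt, Finset.mem_filter] at hs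
    rw [Finset.mem_range]
    exact lt_of_le_of_ne (M.layer_le s) (fun he => hs.2 (M.eq_sL_of_layer s he))
  -- Step A
  have stepA : ∑ s ∈ filt, ∑ a, |f1 (M.layer s) s * π₁ s a - f2 (M.layer s) s * π2s s a|
      ≤ 2 * Et + ∑ s ∈ filt, |f1 (M.layer s) s - f2 (M.layer s) s| := by
    rw [hEt, Finset.mul_sum, ← Finset.sum_add_distrib]
    apply Finset.sum_le_sum; intro s _
    have hb : ∀ a, f2 (M.layer s) s * π2s s a = if a = π₂ s then f2 (M.layer s) s else 0 := by
      intro a; simp only [hπ2s]; split <;> ring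
    simp only [hb]
    exact abs_sum_det (π₁ s) (hπ0 s) (hπsum s) (π₂ s) _ _ (hf1nn _ s)
  -- Step B
  have stepB : ∑ s ∈ filt, |f1 (M.layer s) s - f2 (M.layer s) s|
      ≤ ∑ k ∈ Finset.range M.L, ∑ s, |f1 k s - f2 k s| := by
    rw [← Finset.sum_fiberwise_of_maps_to hmaps
      (fun s => |f1 (M.layer s) s - f2 (M.layer s) s|)]
    apply Finset.sum_le_sum; intro k _
    calc ∑ s ∈ filt.filter (fun s => M.layer s = k), |f1 (M.layer s) s - f2 (M.layer s) s|
        = ∑ s ∈ filt.filter (fun s => M.layer s = k), |f1 k s - f2 k s| := by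
          apply Finset.sum_congr rfl; intro s hs
          rw [(Finset.mem_filter.mp hs).2]
      _ ≤ ∑ s, |f1 k s - f2 k s| :=
          Finset.sum_le_sum_of_subset_of_nonneg (Finset.subset_univ _)
            (fun _ _ _ => abs_nonneg _)
  -- Step C
  have stepC : ∑ j ∈ Finset.range M.L, ∑ s, ∑ a ∈ Finset.univ.filter (fun a => a ≠ π₂ s),
      f1 j s * π₁ s a = Et := by
    rw [hEt, ← Finset.sum_fiberwise_of_maps_to hmaps
      (fun s => ∑ a ∈ Finset.univ.filter (fun a => a ≠ π₂ s), f1 (M.layer s) s * π₁ s a)]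
    apply Finset.sum_congr rfl; intro j hj
    rw [Finset.mem_range] at hj
    have hcg : ∑ s ∈ filt.filter (fun s => M.layer s = j),
        ∑ a ∈ Finset.univ.filter (fun a => a ≠ π₂ s), f1 (M.layer s) s * π₁ s a
        = ∑ s ∈ filt.filter (fun s => M.layer s = j),
        ∑ a ∈ Finset.univ.filter (fun a => a ≠ π₂ s), f1 j s * π₁ s a := by
      apply Finset.sum_congr rfl; intro s hs
      rw [(Finset.mem_filter.mp hs).2]
    rw [hcg]
    refine (Finset.sum_subset (Finset.subset_univ _) ?_).symm
    intro s _ hs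
    have hlj : M.layer s ≠ j := by
      intro hl
      rw [hfilt] at hs
      simp only [Finset.mem_filter, Finset.mem_univ, true_and, not_and] at hs
      have : s = M.sL := by by_contra hne; exact (hs hne) hl
      rw [this, M.layer_sL] at hl
      omega
    exact Finset.sum_eq_zero fun a _ => by rw [hz1 j s hlj, zero_mul]
  -- Et is nonneg, partial sums bounded
  have hEj : ∀ k, k ≤ M.L →
      ∑ j ∈ Finset.range k, ∑ s, ∑ a ∈ Finset.univ.filter (fun a => a ≠ π₂ s),
        f1 j s * π₁ s a ≤ Et := by
    intro k hk
    rw [← stepC]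
    apply Finset.sum_le_sum_of_subset_of_nonneg (Finset.range_subset_range.mpr hk)
    intro j _ _
    exact Finset.sum_nonneg fun s _ => Finset.sum_nonneg fun a _ =>
      mul_nonneg (hf1nn j s) (hπ0 s a)
  have hEtnn : 0 ≤ Et := by
    rw [hEt]
    exact Finset.sum_nonneg fun s _ => Finset.sum_nonneg fun a _ =>
      mul_nonneg (hf1nn _ s) (hπ0 s a)
  -- Step D
  have stepD : ∑ k ∈ Finset.range M.L, ∑ s, |f1 k s - f2 k s|
      ≤ 2 * ((M.L : ℝ) - 1) * Et := by
    obtain ⟨L', hL'⟩ : ∃ L', M.L = L' + 1 := ⟨M.L - 1, by have := M.one_le_L; omega⟩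
    rw [hL', Finset.sum_range_succ']
    have h0 : ∑ s, |f1 0 s - f2 0 s| = 0 := by
      apply Finset.sum_eq_zero; intro s _
      show |M.occAuxFrom P π₁ M.s0 0 s - M.occAuxFrom P π2s M.s0 0 s| = 0
      simp [LayeredMDP.occAuxFrom]
    rw [h0, add_zero]
    calc ∑ i ∈ Finset.range L', ∑ s, |f1 (i+1) s - f2 (i+1) s|
        ≤ ∑ _i ∈ Finset.range L', 2 * Et := by
          apply Finset.sum_le_sum; intro i hi
          rw [Finset.mem_range] at hi
          have hb := M.cum_bound P hP π₁ hπ₁ π₂ (i+1) (by omega)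
          have hb2 := hEj (i+1) (by omega)
          calc ∑ s, |f1 (i+1) s - f2 (i+1) s| ≤ _ := hb
            _ ≤ 2 * Et := by linarith
      _ = L' * (2 * Et) := by rw [Finset.sum_const, Finset.card_range, nsmul_eq_mul]
      _ = 2 * (((L' + 1 : ℕ) : ℝ) - 1) * Et := by push_cast; ring
  calc ∑ s ∈ filt, ∑ a, |f1 (M.layer s) s * π₁ s a - f2 (M.layer s) s * π2s s a|
      ≤ 2 * Et + ∑ s ∈ filt, |f1 (M.layer s) s - f2 (M.layer s) s| := stepA
    _ ≤ 2 * Et + 2 * ((M.L : ℝ) - 1) * Et := by linarith [stepB, stepD]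
    _ ≤ 2 * (M.L : ℝ) * Et := by nlinarith [hEtnn]
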